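/- Let 0 < η ≤ 1/2 be real, let p, t ≥ 2 be integers, let 1 ≤ a_1 ≤ … ≤ a_{p−1} ≤ t be integers, and let δ = η^(t^(10p)). Then for every integer m ≥ 2t/η and every integer a_p with 1 ≤ a_p ≤ δm, every K_p(a_1,…,a_p)-free graph Γ on m vertices has at most η·m^p copies of K_p. -/

import Mathlib

open SimpleGraph
open scoped Classical

/-- `ContainsCopy G Γ` : `Γ` contains a (not necessarily induced) copy of `G`. -/
def ContainsCopy {α β : Type*} (G : SimpleGraph α) (Γ : SimpleGraph β) : Prop :=
  ∃ f : α → β, Function.Injective f ∧ ∀ ⦃a b⦄, G.Adj a b → Γ.Adj (f a) (f b)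

/-- The book graph `B_{k,n}`: `n` vertices, the first `k` of which form the spine. -/
def Book (k n : ℕ) : SimpleGraph (Fin n) :=
  SimpleGraph.fromRel (fun a b => (a : ℕ) < k ∨ (b : ℕ) < k)

/-- The Ramsey number `r(G,H)`: the least `N` such that every graph `Γ` on `N` vertices
contains a copy of `G`, or its complement contains a copy of `H`. -/
noncomputable def ramseyNumber {α β : Type*} (G : SimpleGraph α) (H : SimpleGraph β) : ℕ :=
  sInf {N | ∀ Γ : SimpleGraph (Fin N), ContainsCopy G Γ ∨ ContainsCopy H Γᶜ}

/-- The degree of a vertex. -/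
noncomputable def degCount {V : Type*} (Γ : SimpleGraph V) (v : V) : ℕ :=
  (Γ.neighborSet v).ncard

/-- The number of copies of `K_p` in `Γ`, i.e. sets of `p` pairwise adjacent vertices. -/
noncomputable def cliqueCount {V : Type*} (Γ : SimpleGraph V) (p : ℕ) : ℕ :=
  {s : Finset V | Γ.IsNClique p s}.ncard

/-- `Γ` contains an induced copy of the complete multipartite graph with all parts
of size `t`, with parts `P 0, …, P (r-1)`. -/
def IsCompleteMultipartiteIn {V : Type*} (Γ : SimpleGraph V) {r : ℕ} (t : ℕ)
    (P : Fin r → Finset V) : Prop :=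
  (∀ i, (P i).card = t) ∧
  (∀ i j, i ≠ j → Disjoint (P i) (P j)) ∧
  (∀ i, ∀ a ∈ P i, ∀ b ∈ P i, ¬ Γ.Adj a b) ∧
  (∀ i j, i ≠ j → ∀ a ∈ P i, ∀ b ∈ P j, Γ.Adj a b)

/-- The number of edges of `Γ` with both endpoints inside `s`. -/
noncomputable def edgesInside {V : Type*} (Γ : SimpleGraph V) (s : Finset V) : ℕ :=
  {e ∈ Γ.edgeSet | ∀ v ∈ e, v ∈ s}.ncard

section Helpers
variable {m : ℕ}

noncomputable def commonNbr (Γ : SimpleGraph (Fin m)) (A : Finset (Fin m)) : Finset (Fin m) :=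
  Finset.univ.filter fun v => ∀ a ∈ A, Γ.Adj a v

lemma mem_commonNbr {Γ : SimpleGraph (Fin m)} {A : Finset (Fin m)} {v : Fin m} :
    v ∈ commonNbr Γ A ↔ ∀ a ∈ A, Γ.Adj a v := by simp [commonNbr]

noncomputable def cliquesIn (Γ : SimpleGraph (Fin m)) (W : Finset (Fin m)) (p : ℕ) :
    Finset (Finset (Fin m)) :=
  (W.powersetCard p).filter fun s => Γ.IsClique (s : Set (Fin m))

lemma mem_cliquesIn {Γ : SimpleGraph (Fin m)} {W s : Finset (Fin m)} {p : ℕ} :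
    s ∈ cliquesIn Γ W p ↔ s ⊆ W ∧ s.card = p ∧ Γ.IsClique (s : Set (Fin m)) := by
  simp [cliquesIn, Finset.mem_powersetCard, and_assoc]

lemma card_cliquesIn_le (Γ : SimpleGraph (Fin m)) (W : Finset (Fin m)) (p : ℕ) :
    (cliquesIn Γ W p).card ≤ m ^ p := by
  calc (cliquesIn Γ W p).card ≤ (W.powersetCard p).card :=
        Finset.card_le_card (Finset.filter_subset _ _)
    _ = W.card.choose p := Finset.card_powersetCard _ _
    _ ≤ m.choose p := Nat.choose_mono _ (by simpa using Finset.card_le_univ W)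
    _ ≤ m ^ p := Nat.choose_le_pow _ _

/-- Double counting: each (p+1)-clique gives p+1 pairs (p-clique, extension vertex). -/
lemma sum_common_ge (Γ : SimpleGraph (Fin m)) (W : Finset (Fin m)) (p : ℕ) :
    (p + 1) * (cliquesIn Γ W (p + 1)).card ≤
      ∑ K ∈ cliquesIn Γ W p, (W ∩ commonNbr Γ K).card := by
  have h1 : (p + 1) * (cliquesIn Γ W (p + 1)).card
      = ((cliquesIn Γ W (p + 1)).sigma fun K => K).card := by
    rw [Finset.card_sigma]
    rw [Finset.sum_congr rfl (fun K hK => (mem_cliquesIn.1 hK).2.1), Finset.sum_const,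
      smul_eq_mul, mul_comm]
  have h2 : ((cliquesIn Γ W p).sigma fun K => W ∩ commonNbr Γ K).card
      = ∑ K ∈ cliquesIn Γ W p, (W ∩ commonNbr Γ K).card := Finset.card_sigma _ _
  rw [h1, ← h2]
  apply Finset.card_le_card_of_injOn (fun x => ⟨x.1.erase x.2, x.2⟩)
  · rintro ⟨K, v⟩ hKv
    simp only [Finset.mem_coe, Finset.mem_sigma] at hKv ⊢
    obtain ⟨hK, hv⟩ := hKv
    obtain ⟨hKW, hKcard, hKcl⟩ := mem_cliquesIn.1 hK
    refine ⟨mem_cliquesIn.2 ⟨(Finset.erase_subset _ _).trans hKW, ?_, ?_⟩, ?_⟩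
    · rw [Finset.card_erase_of_mem hv, hKcard]; rfl
    · exact hKcl.subset (by simp [Finset.erase_subset])
    · refine Finset.mem_inter.2 ⟨hKW hv, mem_commonNbr.2 fun a ha => ?_⟩
      have := Finset.mem_erase.1 ha
      exact hKcl this.2 hv this.1
  · rintro ⟨K, v⟩ hKv ⟨K', v'⟩ hKv' h
    simp only [Finset.mem_coe, Finset.mem_sigma] at hKv hKv'
    have h' : (⟨K.erase v, v⟩ : Σ _ : Finset (Fin m), Fin m) = ⟨K'.erase v', v'⟩ := h
    simp only [Sigma.mk.inj_iff, heq_iff_eq] at h'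
    obtain ⟨hE, hv⟩ := h'
    subst hv
    simp only [Sigma.mk.inj_iff, heq_iff_eq]
    refine ⟨?_, trivial⟩
    have : insert v (K.erase v) = insert v (K'.erase v) := by rw [hE]
    rwa [Finset.insert_erase hKv.2, Finset.insert_erase hKv'.2] at this

set_option maxHeartbeats 1000000 in
lemma step_lemma (t : ℕ) (ht : 1 ≤ t) (Γ : SimpleGraph (Fin m)) (W : Finset (Fin m))
    (p : ℕ) (c : ℝ) (hc : 0 < c) (h4t : (4 * t : ℝ) ≤ c * m)
    (hcount : c * (m : ℝ) ^ (p + 1) ≤ ((cliquesIn Γ W (p + 1)).card : ℝ)) :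
    ∃ A : Finset (Fin m), A ⊆ W ∧ A.card = t ∧
      (c / (4 * t)) ^ t * (m : ℝ) ^ p ≤ ((cliquesIn Γ (W ∩ commonNbr Γ A) p).card : ℝ) := by
  obtain ⟨t', rfl⟩ : ∃ t', t = t' + 1 := ⟨t - 1, by omega⟩
  set T : ℕ := t' + 1 with hT
  have ht' : (1 : ℝ) ≤ T := by exact_mod_cast ht
  have h4t0 : (0 : ℝ) < 4 * T := by linarith
  have hcm : (0 : ℝ) < c * m := lt_of_lt_of_le h4t0 h4t
  have hm0 : (0 : ℝ) < (m : ℝ) := by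
    rcases (Nat.cast_nonneg (α := ℝ) m).lt_or_eq with h | h
    · exact h
    · exfalso; rw [← h, mul_zero] at hcm; exact lt_irrefl _ hcm
  set 𝒦 := cliquesIn Γ W p with h𝒦
  set d : Finset (Fin m) → ℕ := fun K => (W ∩ commonNbr Γ K).card with hd
  have hsum1 : c * (m : ℝ) ^ (p + 1) ≤ ∑ K ∈ 𝒦, (d K : ℝ) := by
    have h1 := sum_common_ge Γ W p
    have h2 : (cliquesIn Γ W (p + 1)).card ≤ (p + 1) * (cliquesIn Γ W (p + 1)).card :=
      Nat.le_mul_of_pos_left _ (Nat.succ_pos p)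
    calc c * (m : ℝ) ^ (p + 1) ≤ ((cliquesIn Γ W (p + 1)).card : ℝ) := hcount
      _ ≤ ((∑ K ∈ 𝒦, d K : ℕ) : ℝ) := by exact_mod_cast le_trans h2 h1
      _ = ∑ K ∈ 𝒦, (d K : ℝ) := by push_cast; rfl
  set 𝒢 := 𝒦.filter (fun K => c / 2 * m ≤ (d K : ℝ)) with h𝒢
  have hKle : (𝒦.card : ℝ) ≤ (m : ℝ) ^ p := by exact_mod_cast card_cliquesIn_le Γ W p
  have hsumbad : ∑ K ∈ 𝒦.filter (fun K => ¬ (c / 2 * m ≤ (d K : ℝ))), (d K : ℝ)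
      ≤ (m : ℝ) ^ p * (c / 2 * m) := by
    calc ∑ K ∈ 𝒦.filter (fun K => ¬ (c / 2 * m ≤ (d K : ℝ))), (d K : ℝ)
        ≤ (𝒦.filter (fun K => ¬ (c / 2 * m ≤ (d K : ℝ)))).card • (c / 2 * m) :=
          Finset.sum_le_card_nsmul _ _ _
            (fun K hK => le_of_lt (lt_of_not_ge (Finset.mem_filter.1 hK).2))
      _ = ((𝒦.filter (fun K => ¬ (c / 2 * m ≤ (d K : ℝ)))).card : ℝ) * (c / 2 * m) :=
          nsmul_eq_mul _ _
      _ ≤ (m : ℝ) ^ p * (c / 2 * m) := by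
          apply mul_le_mul_of_nonneg_right _ (by positivity)
          exact le_trans (by exact_mod_cast Finset.card_le_card (Finset.filter_subset _ _)) hKle
  have hsplit := Finset.sum_filter_add_sum_filter_not 𝒦 (fun K => c / 2 * m ≤ (d K : ℝ))
    (fun K => (d K : ℝ))
  have heq0 : (m : ℝ) ^ p * (c / 2 * m) = c / 2 * (m : ℝ) ^ (p + 1) := by rw [pow_succ]; ring
  have hGsum : c / 2 * (m : ℝ) ^ (p + 1) ≤ ∑ K ∈ 𝒢, (d K : ℝ) := by
    rw [h𝒢]; linarith [hsplit, hsum1, hsumbad, heq0]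
  have hGpos : (0 : ℝ) < ∑ K ∈ 𝒢, (d K : ℝ) := lt_of_lt_of_le (by positivity) hGsum
  have hGne : 𝒢.Nonempty := by
    by_contra h
    rw [Finset.not_nonempty_iff_eq_empty] at h
    rw [h, Finset.sum_empty] at hGpos
    exact lt_irrefl _ hGpos
  have hGcard0 : (0 : ℝ) < (𝒢.card : ℝ) := by exact_mod_cast Finset.card_pos.2 hGne
  have hGcardle : (𝒢.card : ℝ) ≤ (m : ℝ) ^ p :=
    le_trans (by exact_mod_cast Finset.card_le_card (Finset.filter_subset _ _)) hKle
  -- power mean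
  have hpm : (∑ K ∈ 𝒢, (d K : ℝ)) ^ T / (𝒢.card : ℝ) ^ t' ≤ ∑ K ∈ 𝒢, (d K : ℝ) ^ T :=
    pow_sum_div_card_le_sum_pow (fun i _ => by positivity) t'
  have hsumpow : (c / 2) ^ T * (m : ℝ) ^ (p + T) ≤ ∑ K ∈ 𝒢, (d K : ℝ) ^ T := by
    have hnum : (c / 2 * (m : ℝ) ^ (p + 1)) ^ T ≤ (∑ K ∈ 𝒢, (d K : ℝ)) ^ T :=
      pow_le_pow_left₀ (by positivity) hGsum T
    have hle : (c / 2 * (m : ℝ) ^ (p + 1)) ^ T / ((m : ℝ) ^ p) ^ t'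
        ≤ (∑ K ∈ 𝒢, (d K : ℝ)) ^ T / (𝒢.card : ℝ) ^ t' :=
      div_le_div₀ (le_trans (by positivity) hnum) hnum (pow_pos hGcard0 t')
        (pow_le_pow_left₀ hGcard0.le hGcardle t')
    have heq : (c / 2 * (m : ℝ) ^ (p + 1)) ^ T / ((m : ℝ) ^ p) ^ t'
        = (c / 2) ^ T * (m : ℝ) ^ (p + T) := by
      rw [mul_pow, ← pow_mul, ← pow_mul, div_eq_iff (pow_ne_zero _ hm0.ne'), mul_assoc,
        ← pow_add]
      congr 1
      rw [hT]; ring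
    rw [← heq]
    exact le_trans hle hpm
  -- binomials
  have hchoose : ∀ K ∈ 𝒢, ((d K : ℝ) / (2 * T)) ^ T ≤ ((d K).choose T : ℝ) := by
    intro K hK
    have hdK : c / 2 * m ≤ (d K : ℝ) := (Finset.mem_filter.1 hK).2
    have hd2t : (2 * T : ℝ) ≤ (d K : ℝ) := by
      have hhalf : c / 2 * (m : ℝ) = c * m / 2 := by ring
      linarith
    have htd : T ≤ d K := by
      have : (T : ℝ) ≤ (d K : ℝ) := by linarith
      exact_mod_cast this
    have h1 : (d K : ℝ) / 2 ≤ ((d K + 1 - T : ℕ) : ℝ) := by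
      rw [Nat.cast_sub (by omega)]
      have hTt : (T : ℝ) = (t' : ℝ) + 1 := by rw [hT]; push_cast; ring
      push_cast
      linarith
    calc ((d K : ℝ) / (2 * T)) ^ T = ((d K : ℝ) / 2 / T) ^ T := by rw [div_div]
      _ = ((d K : ℝ) / 2) ^ T / (T : ℝ) ^ T := div_pow _ _ _
      _ ≤ ((d K + 1 - T : ℕ) : ℝ) ^ T / ((T.factorial : ℕ) : ℝ) :=
          div_le_div₀ (by positivity) (pow_le_pow_left₀ (by positivity) h1 T)
            (by exact_mod_cast T.factorial_pos) (by exact_mod_cast T.factorial_le_pow)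
      _ ≤ ((d K).choose T : ℝ) := Nat.pow_le_choose T (d K)
  have hsumchoose : (c / (4 * T)) ^ T * (m : ℝ) ^ (p + T) ≤ ∑ K ∈ 𝒢, ((d K).choose T : ℝ) := by
    have h1 : ∑ K ∈ 𝒢, ((d K : ℝ) / (2 * T)) ^ T ≤ ∑ K ∈ 𝒢, ((d K).choose T : ℝ) :=
      Finset.sum_le_sum hchoose
    have h2 : ∑ K ∈ 𝒢, ((d K : ℝ) / (2 * T)) ^ T = (∑ K ∈ 𝒢, (d K : ℝ) ^ T) / (2 * T : ℝ) ^ T := by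
      rw [Finset.sum_div]
      exact Finset.sum_congr rfl fun K _ => div_pow _ _ _
    have h3 : (c / (4 * T)) ^ T * (m : ℝ) ^ (p + T)
        = ((c / 2) ^ T * (m : ℝ) ^ (p + T)) / (2 * T : ℝ) ^ T := by
      rw [show (c / (4 * (T:ℝ))) = (c / 2) / (2 * T) by rw [div_div]; ring_nf, div_pow]
      ring
    rw [h3]
    calc ((c / 2) ^ T * (m : ℝ) ^ (p + T)) / (2 * T : ℝ) ^ T
        ≤ (∑ K ∈ 𝒢, (d K : ℝ) ^ T) / (2 * T : ℝ) ^ T :=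
          (div_le_div_iff_of_pos_right (by positivity)).2 hsumpow
      _ = ∑ K ∈ 𝒢, ((d K : ℝ) / (2 * T)) ^ T := h2.symm
      _ ≤ ∑ K ∈ 𝒢, ((d K).choose T : ℝ) := h1
  -- double counting over candidate sets A
  set 𝒜 := W.powersetCard T with h𝒜
  have hswap : ∑ K ∈ 𝒢, ((d K).choose T)
      = ∑ A ∈ 𝒜, (𝒢.filter (fun K => A ⊆ commonNbr Γ K)).card := by
    have hKA : ∀ K, (d K).choose T = (𝒜.filter (fun A => A ⊆ commonNbr Γ K)).card := by
      intro K
      rw [hd]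
      rw [← Finset.card_powersetCard]
      congr 1
      ext A
      simp only [Finset.mem_powersetCard, Finset.mem_filter, h𝒜, Finset.subset_inter_iff]
      tauto
    rw [Finset.sum_congr rfl (fun K _ => hKA K)]
    simp_rw [Finset.card_filter]
    exact Finset.sum_comm
  have hAcard : (𝒜.card : ℝ) ≤ (m : ℝ) ^ T := by
    have : 𝒜.card = W.card.choose T := Finset.card_powersetCard _ _
    have h2 : W.card.choose T ≤ m.choose T :=
      Nat.choose_mono _ (by simpa using Finset.card_le_univ W)
    have h3 : m.choose T ≤ m ^ T := Nat.choose_le_pow _ _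
    exact_mod_cast this ▸ le_trans h2 h3
  have hAne : 𝒜.Nonempty := by
    obtain ⟨K, hK⟩ := hGne
    have hdK : c / 2 * m ≤ (d K : ℝ) := (Finset.mem_filter.1 hK).2
    have h2T : (T : ℝ) ≤ (d K : ℝ) := by linarith
    have hTW : T ≤ W.card := by
      have : d K ≤ W.card := Finset.card_le_card (Finset.inter_subset_left)
      have hTd : T ≤ d K := by exact_mod_cast h2T
      omega
    obtain ⟨A, hAW, hAc⟩ := Finset.exists_subset_card_eq hTW
    exact ⟨A, Finset.mem_powersetCard.2 ⟨hAW, hAc⟩⟩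
  have hbest : ∃ A ∈ 𝒜, (c / (4 * T)) ^ T * (m : ℝ) ^ p
      ≤ ((𝒢.filter (fun K => A ⊆ commonNbr Γ K)).card : ℝ) := by
    apply Finset.exists_le_of_sum_le hAne
    rw [Finset.sum_const, nsmul_eq_mul]
    calc (𝒜.card : ℝ) * ((c / (4 * T)) ^ T * (m : ℝ) ^ p)
        ≤ (m : ℝ) ^ T * ((c / (4 * T)) ^ T * (m : ℝ) ^ p) := by
          apply mul_le_mul_of_nonneg_right hAcard (by positivity)
      _ = (c / (4 * T)) ^ T * (m : ℝ) ^ (p + T) := by rw [pow_add]; ring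
      _ ≤ ∑ K ∈ 𝒢, ((d K).choose T : ℝ) := hsumchoose
      _ = ∑ A ∈ 𝒜, ((𝒢.filter (fun K => A ⊆ commonNbr Γ K)).card : ℝ) := by
          exact_mod_cast congrArg (Nat.cast : ℕ → ℝ) hswap
  obtain ⟨A, hA𝒜, hAbound⟩ := hbest
  obtain ⟨hAW, hAcardt⟩ := Finset.mem_powersetCard.1 hA𝒜
  refine ⟨A, hAW, hAcardt, le_trans hAbound ?_⟩
  have hsub : 𝒢.filter (fun K => A ⊆ commonNbr Γ K) ⊆ cliquesIn Γ (W ∩ commonNbr Γ A) p := by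
    intro K hK
    obtain ⟨hKG, hAcn⟩ := Finset.mem_filter.1 hK
    obtain ⟨hKW, hKcard, hKcl⟩ := mem_cliquesIn.1 (Finset.mem_filter.1 hKG).1
    refine mem_cliquesIn.2 ⟨fun x hx => Finset.mem_inter.2 ⟨hKW hx, ?_⟩, hKcard, hKcl⟩
    exact mem_commonNbr.2 fun a ha => ((mem_commonNbr.1 (hAcn ha)) x hx).symm
  exact_mod_cast Nat.cast_le.2 (Finset.card_le_card hsub)

noncomputable def densAux (t : ℕ) : ℕ → ℝ → ℝ
  | 0, c => c
  | (k + 1), c => densAux t k ((c / (4 * t)) ^ t)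

lemma densAux_pos (t : ℕ) (ht : 1 ≤ t) : ∀ k (c : ℝ), 0 < c → 0 < densAux t k c := by
  intro k
  induction k with
  | zero => intro c hc; exact hc
  | succ k ih =>
    intro c hc
    have h4 : (0 : ℝ) < 4 * t := by
      have : (1 : ℝ) ≤ t := by exact_mod_cast ht
      linarith
    exact ih _ (pow_pos (div_pos hc h4) t)

lemma densAux_le (t : ℕ) (ht : 1 ≤ t) :
    ∀ k (c : ℝ), 0 < c → c ≤ 1 → densAux t k c ≤ c ∧ densAux t k c ≤ 1 := by
  intro k
  induction k with
  | zero => intro c hc hc1; exact ⟨le_refl c, hc1⟩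
  | succ k ih =>
    intro c hc hc1
    have ht' : (1 : ℝ) ≤ t := by exact_mod_cast ht
    have h4 : (0 : ℝ) < 4 * t := by linarith
    have h14 : (1 : ℝ) ≤ 4 * t := by linarith
    have hdiv0 : 0 ≤ c / (4 * t) := le_of_lt (div_pos hc h4)
    have hdiv1 : c / (4 * t) ≤ 1 := by
      rw [div_le_one h4]; linarith
    have hc'0 : 0 < (c / (4 * t)) ^ t := pow_pos (div_pos hc h4) t
    have hc'1 : (c / (4 * t)) ^ t ≤ 1 := pow_le_one₀ hdiv0 hdiv1
    have hc'c : (c / (4 * t)) ^ t ≤ c := by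
      calc (c / (4 * t)) ^ t ≤ (c / (4 * t)) ^ 1 := pow_le_pow_of_le_one hdiv0 hdiv1 ht
        _ = c / (4 * t) := pow_one _
        _ ≤ c := div_le_self hc.le h14
    obtain ⟨h1, h2⟩ := ih _ hc'0 hc'1
    exact ⟨le_trans h1 hc'c, h2⟩

set_option maxHeartbeats 1000000 in
lemma multi_lemma (t : ℕ) (ht : 1 ≤ t) (Γ : SimpleGraph (Fin m)) :
    ∀ (k : ℕ) (c : ℝ) (W : Finset (Fin m)), 0 < c → c ≤ 1 →
    (4 * t : ℝ) ≤ densAux t k c * m →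
    c * (m : ℝ) ^ (k + 1) ≤ ((cliquesIn Γ W (k + 1)).card : ℝ) →
    ∀ q : ℕ, (q : ℝ) ≤ densAux t k c * m →
    ∃ P : Fin (k + 1) → Finset (Fin m),
      (∀ i, P i ⊆ W) ∧
      (∀ i : Fin (k + 1), (i : ℕ) < k → (P i).card = t) ∧
      (P (Fin.last k)).card = q ∧
      (∀ i j, i ≠ j → ∀ x ∈ P i, ∀ y ∈ P j, Γ.Adj x y) := by
  intro k
  induction k with
  | zero =>
    intro c W hc hc1 h4t hcount q hq
    have hfull : cliquesIn Γ W 1 = W.powersetCard 1 := by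
      ext s
      rw [mem_cliquesIn, Finset.mem_powersetCard]
      constructor
      · rintro ⟨h1, h2, _⟩; exact ⟨h1, h2⟩
      · rintro ⟨h1, h2⟩
        refine ⟨h1, h2, ?_⟩
        obtain ⟨a, rfl⟩ := Finset.card_eq_one.1 h2
        intro x hx y hy hxy
        exfalso
        simp only [Finset.coe_singleton, Set.mem_singleton_iff] at hx hy
        exact hxy (hx.trans hy.symm)
    have hcard : (cliquesIn Γ W 1).card = W.card := by
      rw [hfull, Finset.card_powersetCard, Nat.choose_one_right]
    have hqW : q ≤ W.card := by
      have h1 : (q : ℝ) ≤ c * m := hq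
      have h2 : c * (m : ℝ) ≤ (W.card : ℝ) := by
        have := hcount
        rwa [pow_one, hcard] at this
      exact_mod_cast le_trans h1 h2
    obtain ⟨S, hSW, hSc⟩ := Finset.exists_subset_card_eq hqW
    refine ⟨fun _ => S, fun _ => hSW, fun i hi => absurd hi (by omega), hSc, ?_⟩
    intro i j hij
    have hi := i.isLt
    have hj := j.isLt
    exact absurd (Fin.ext (by omega)) hij
  | succ k ih =>
    intro c W hc hc1 h4t hcount q hq
    have ht' : (1 : ℝ) ≤ t := by exact_mod_cast ht
    set c' : ℝ := (c / (4 * t)) ^ t with hc'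
    have h4 : (0 : ℝ) < 4 * t := by linarith
    have hc'0 : 0 < c' := pow_pos (div_pos hc h4) t
    have hc'1 : c' ≤ 1 := by
      apply pow_le_one₀ (le_of_lt (div_pos hc h4))
      rw [div_le_one h4]; linarith
    have hdle : densAux t (k + 1) c ≤ c := (densAux_le t ht (k + 1) c hc hc1).1
    have hm0 : (0 : ℝ) ≤ m := Nat.cast_nonneg m
    have h4tc : (4 * t : ℝ) ≤ c * m :=
      le_trans h4t (mul_le_mul_of_nonneg_right hdle hm0)
    obtain ⟨A, hAW, hAcard, hAcount⟩ := step_lemma t ht Γ W (k + 1) c hc h4tc hcount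
    have hdeq : densAux t (k + 1) c = densAux t k c' := rfl
    obtain ⟨P', hPW, hPt, hPq, hPadj⟩ :=
      ih c' (W ∩ commonNbr Γ A) hc'0 hc'1 (hdeq ▸ h4t) hAcount q (hdeq ▸ hq)
    refine ⟨Fin.cases A (fun j => P' j), ?_, ?_, ?_, ?_⟩
    · intro i
      refine Fin.cases ?_ ?_ i
      · simpa using hAW
      · intro j
        simp only [Fin.cases_succ]
        exact (hPW j).trans Finset.inter_subset_left
    · intro i
      refine Fin.cases ?_ ?_ i
      · intro _; simpa using hAcard
      · intro j hj
        simp only [Fin.cases_succ]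
        have hj' : (j : ℕ) + 1 < k + 1 := by simpa using hj
        exact hPt j (by omega)
    · rw [← Fin.succ_last]
      simp only [Fin.cases_succ]
      exact hPq
    · intro i j hij x hx y hy
      have key : ∀ (u : Fin m) (j' : Fin (k + 1)), u ∈ A →
          ∀ v ∈ P' j', Γ.Adj u v := by
        intro u j' hu v hv
        have hv' := hPW j' hv
        exact (mem_commonNbr.1 (Finset.mem_inter.1 hv').2) u hu
      induction i using Fin.cases with
      | zero =>
        induction j using Fin.cases with
        | zero => exact absurd rfl hij
        | succ j =>
          simp only [Fin.cases_zero] at hx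
          simp only [Fin.cases_succ] at hy
          exact key x j hx y hy
      | succ i =>
        induction j using Fin.cases with
        | zero =>
          simp only [Fin.cases_succ] at hx
          simp only [Fin.cases_zero] at hy
          exact (key y i hy x hx).symm
        | succ j =>
          simp only [Fin.cases_succ] at hx hy
          refine hPadj i j (fun h => hij (by rw [h])) x hx y hy

def skAux (t : ℕ) : ℕ → ℕ
  | 0 => 0
  | (k + 1) => t ^ (k + 1) + skAux t k

lemma densAux_eq (t : ℕ) (ht : 1 ≤ t) :
    ∀ (k : ℕ) (c : ℝ), densAux t k c = c ^ (t ^ k) / (4 * t : ℝ) ^ (skAux t k) := by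
  intro k
  induction k with
  | zero => intro c; simp [densAux, skAux]
  | succ k ih =>
    intro c
    have h4 : (0 : ℝ) < 4 * t := by
      have : (1 : ℝ) ≤ t := by exact_mod_cast ht
      linarith
    rw [show densAux t (k + 1) c = densAux t k ((c / (4 * t)) ^ t) from rfl, ih]
    rw [← pow_mul, show t * t ^ k = t ^ (k + 1) from (pow_succ' t k).symm]
    rw [div_pow, div_div, ← pow_add, skAux]

lemma skAux_le (t : ℕ) (ht : 2 ≤ t) : ∀ k, skAux t k ≤ 2 * t ^ k := by
  intro k
  induction k with
  | zero => simp [skAux]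
  | succ k ih =>
    rw [skAux]
    have h1 : 2 * t ^ k ≤ t ^ (k + 1) := by
      rw [pow_succ, mul_comm 2 (t ^ k)]
      exact Nat.mul_le_mul_left _ ht
    omega

lemma four_t_le (t : ℕ) (ht : 2 ≤ t) : 4 * t ≤ 2 ^ (t ^ 3) := by
  have h2 : t < 2 ^ t := Nat.lt_two_pow_self
  have h3 : t + 2 ≤ t ^ 3 := by
    have he : t ^ 3 = t * (t * t) := by ring
    nlinarith
  calc 4 * t ≤ 4 * 2 ^ t := by omega
    _ = 2 ^ (t + 2) := by ring
    _ ≤ 2 ^ (t ^ 3) := Nat.pow_le_pow_right (by omega) h3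

lemma inv_fourt_ge (t : ℕ) (ht : 2 ≤ t) (η : ℝ) (hη0 : 0 < η) (hη : η ≤ 1 / 2) :
    η ^ (t ^ 3) * (4 * t : ℝ) ≤ 1 := by
  have h1 : (2 : ℝ) ≤ 1 / η := by
    rw [le_div_iff₀ hη0]; linarith
  have h2 : (4 * t : ℝ) ≤ (2 : ℝ) ^ (t ^ 3) := by exact_mod_cast four_t_le t ht
  have h3 : (2 : ℝ) ^ (t ^ 3) ≤ (1 / η) ^ (t ^ 3) := by
    apply pow_le_pow_left₀ (by norm_num) h1
  have h4 : (4 * t : ℝ) ≤ (1 / η) ^ (t ^ 3) := le_trans h2 h3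
  have h5 : (0 : ℝ) < η ^ (t ^ 3) := pow_pos hη0 _
  calc η ^ (t ^ 3) * (4 * t : ℝ) ≤ η ^ (t ^ 3) * (1 / η) ^ (t ^ 3) :=
        mul_le_mul_of_nonneg_left h4 h5.le
    _ = (η * (1 / η)) ^ (t ^ 3) := (mul_pow _ _ _).symm
    _ = 1 := by rw [mul_one_div_cancel hη0.ne']; exact one_pow _

lemma densAux_ge (t : ℕ) (ht : 2 ≤ t) (η : ℝ) (hη0 : 0 < η) (hη : η ≤ 1 / 2) (k : ℕ) :
    η ^ (t ^ (k + 5)) ≤ densAux t k η := by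
  have ht1 : 1 ≤ t := by omega
  have h4 : (0 : ℝ) < 4 * t := by
    have : (1 : ℝ) ≤ t := by exact_mod_cast ht1
    linarith
  rw [densAux_eq t ht1 k η]
  have hkey : η ^ (t ^ k + t ^ 3 * skAux t k) ≤ η ^ (t ^ k) / (4 * t : ℝ) ^ (skAux t k) := by
    rw [le_div_iff₀ (pow_pos h4 _), pow_add, mul_assoc, pow_mul, ← mul_pow]
    have h1 : (η ^ (t ^ 3) * (4 * t : ℝ)) ^ (skAux t k) ≤ 1 := by
      apply pow_le_one₀ (by positivity) (inv_fourt_ge t ht η hη0 hη)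
    nlinarith [pow_pos hη0 (t ^ k), pow_nonneg hη0.le (t ^ k)]
  refine le_trans ?_ hkey
  apply pow_le_pow_of_le_one hη0.le (by linarith)
  have h1 : skAux t k ≤ 2 * t ^ k := skAux_le t ht k
  have h2 : t ^ k + t ^ 3 * skAux t k ≤ t ^ k + t ^ 3 * (2 * t ^ k) := by
    have := Nat.mul_le_mul_left (t ^ 3) h1
    omega
  refine le_trans h2 ?_
  have h3 : t ^ k + t ^ 3 * (2 * t ^ k) = (1 + 2 * t ^ 3) * t ^ k := by ring
  have h4' : t ^ (k + 5) = t ^ 5 * t ^ k := by rw [pow_add]; ring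
  rw [h3, h4']
  apply Nat.mul_le_mul_right
  have e2 : 4 ≤ t ^ 2 := by nlinarith
  have e3 : 1 ≤ t ^ 3 := Nat.one_le_pow _ _ (by omega)
  have e4 : 4 * t ^ 3 ≤ t ^ 2 * t ^ 3 := Nat.mul_le_mul_right _ e2
  have e5 : t ^ 2 * t ^ 3 = t ^ 5 := by ring
  omega

set_option maxHeartbeats 1000000 in
theorem zarankiewicz_type (η : ℝ) (hη0 : 0 < η) (hη : η ≤ 1 / 2)
    (p t : ℕ) (hp : 2 ≤ p) (ht : 2 ≤ t)
    (a : Fin p → ℕ) (ha1 : 1 ≤ a ⟨0, by omega⟩)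
    (hmono : ∀ i j : Fin p, i ≤ j → (j : ℕ) + 1 < p → a i ≤ a j)
    (hat : ∀ i : Fin p, (i : ℕ) + 1 < p → a i ≤ t)
    (δ : ℝ) (hδ : δ = η ^ (t ^ (10 * p)))
    (m : ℕ) (hm : 2 * (t : ℝ) / η ≤ (m : ℝ))
    (hap1 : 1 ≤ a ⟨p - 1, by omega⟩)
    (hap2 : (a ⟨p - 1, by omega⟩ : ℝ) ≤ δ * m)
    (Γ : SimpleGraph (Fin m))
    (hfree : ¬ ContainsCopy (completeMultipartiteGraph (fun i : Fin p => Fin (a i))) Γ) :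
    (cliqueCount Γ p : ℝ) ≤ η * (m : ℝ) ^ p := by
  classical
  have ht1 : 1 ≤ t := by omega
  have hη1 : η ≤ 1 := by linarith
  by_contra hcon
  push_neg at hcon
  -- clique count as a finset count
  have hcc : (cliqueCount Γ p : ℝ) = ((cliquesIn Γ Finset.univ p).card : ℝ) := by
    have hset : {s : Finset (Fin m) | Γ.IsNClique p s} = ↑(cliquesIn Γ Finset.univ p) := by
      ext s
      simp only [Set.mem_setOf_eq, Finset.mem_coe, mem_cliquesIn, SimpleGraph.isNClique_iff]
      constructor
      · rintro ⟨h1, h2⟩; exact ⟨Finset.subset_univ s, h2, h1⟩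
      · rintro ⟨_, h2, h3⟩; exact ⟨h3, h2⟩
    rw [cliqueCount, hset, Set.ncard_coe_finset]
  rw [hcc] at hcon
  -- numeric facts
  set E : ℕ := t ^ (p + 4) with hE
  set X : ℕ := t ^ (10 * p) with hX
  have hEX : E + (t + 2) ≤ X := by
    have h6 : t + 2 ≤ t ^ 6 := by
      have e2 : 2 * t ≤ t * t := Nat.mul_le_mul_right t ht
      have e2' : t * t = t ^ 2 := by ring
      have e3 : t ^ 2 ≤ t ^ 6 := Nat.pow_le_pow_right (by omega) (by omega)
      omega
    have h7 : t ^ 6 ≤ t ^ (p + 4) := Nat.pow_le_pow_right (by omega) (by omega)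
    have h8 : 2 * t ^ (p + 4) ≤ t ^ (p + 5) := by
      calc 2 * t ^ (p + 4) ≤ t * t ^ (p + 4) := Nat.mul_le_mul_right _ ht
        _ = t ^ (p + 5) := by ring
    have h9 : t ^ (p + 5) ≤ t ^ (10 * p) := Nat.pow_le_pow_right (by omega) (by omega)
    omega
  have hδ0 : 0 < δ := by rw [hδ]; positivity
  have hδm1 : (1 : ℝ) ≤ δ * m := le_trans (by exact_mod_cast hap1) hap2
  have hdge : η ^ E ≤ densAux t (p - 1) η := by
    have := densAux_ge t ht η hη0 hη (p - 1)
    rwa [show p - 1 + 5 = p + 4 by omega] at this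
  have hδd : δ ≤ η ^ E := by
    rw [hδ]
    exact pow_le_pow_of_le_one hη0.le hη1 (Nat.pow_le_pow_right (by omega) (by omega))
  have hm0 : (0 : ℝ) ≤ (m : ℝ) := Nat.cast_nonneg m
  -- 4t ≤ η^E * m
  have key1 : (4 * t : ℝ) ≤ η ^ E * m := by
    have hsplitX : η ^ X = η ^ E * η ^ (X - E) := by
      rw [← pow_add]; congr 1; omega
    have h1 : (1 : ℝ) ≤ η ^ E * (m : ℝ) * η ^ (X - E) := by
      calc (1 : ℝ) ≤ δ * m := hδm1
        _ = η ^ E * (m : ℝ) * η ^ (X - E) := by rw [hδ, hsplitX]; ring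
    have h2 : (1 : ℝ) / η ^ (X - E) ≤ η ^ E * m := by
      rw [div_le_iff₀ (pow_pos hη0 _)]
      linarith
    have h3 : (2 : ℝ) ^ (X - E) ≤ (1 / η) ^ (X - E) := by
      apply pow_le_pow_left₀ (by norm_num)
      rw [le_div_iff₀ hη0]; linarith
    have h4 : (4 * t : ℝ) ≤ (2 : ℝ) ^ (X - E) := by
      have hn : 4 * t ≤ 2 ^ (X - E) := by
        have h5 : 4 * t ≤ 2 ^ (t + 2) := by
          have := @Nat.lt_two_pow_self t
          have : 2 ^ (t + 2) = 4 * 2 ^ t := by ring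
          omega
        exact le_trans h5 (Nat.pow_le_pow_right (by omega) (by omega))
      exact_mod_cast hn
    calc (4 * t : ℝ) ≤ (2 : ℝ) ^ (X - E) := h4
      _ ≤ (1 / η) ^ (X - E) := h3
      _ = 1 / η ^ (X - E) := by rw [one_div_pow]
      _ ≤ η ^ E * m := h2
  have h4tD : (4 * t : ℝ) ≤ densAux t (p - 1) η * m :=
    le_trans key1 (mul_le_mul_of_nonneg_right hdge hm0)
  have hqD : ((a ⟨p - 1, by omega⟩ : ℕ) : ℝ) ≤ densAux t (p - 1) η * m :=
    le_trans hap2 (mul_le_mul_of_nonneg_right (le_trans hδd hdge) hm0)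
  have hcount : η * (m : ℝ) ^ (p - 1 + 1) ≤ ((cliquesIn Γ Finset.univ (p - 1 + 1)).card : ℝ) := by
    rw [show p - 1 + 1 = p by omega]
    exact hcon.le
  obtain ⟨P, hPW, hPt, hPq, hPadj⟩ :=
    multi_lemma t ht1 Γ (p - 1) η Finset.univ hη0 hη1 h4tD hcount (a ⟨p - 1, by omega⟩) hqD
  have hpe : p - 1 + 1 = p := by omega
  have hsizes : ∀ i : Fin p, a i ≤ (P (Fin.cast hpe.symm i)).card := by
    intro i
    by_cases hi : (i : ℕ) + 1 < p
    · have hlt : ((Fin.cast hpe.symm i : Fin (p - 1 + 1)) : ℕ) < p - 1 := by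
        simpa using (show (i : ℕ) < p - 1 by omega)
      rw [hPt _ hlt]
      exact hat i hi
    · have hival : (i : ℕ) = p - 1 := by have := i.isLt; omega
      have hieq : i = ⟨p - 1, by omega⟩ := Fin.ext hival
      have hlast : Fin.cast hpe.symm i = Fin.last (p - 1) := Fin.ext (by simpa using hival)
      rw [hlast, hPq]
      exact le_of_eq (congrArg a hieq)
  have hchoice : ∀ i : Fin p, ∃ Q : Finset (Fin m),
      Q ⊆ P (Fin.cast hpe.symm i) ∧ Q.card = a i :=
    fun i => Finset.exists_subset_card_eq (hsizes i)
  choose Q hQsub hQcard using hchoice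
  have hP2adj : ∀ i j : Fin p, i ≠ j →
      ∀ x ∈ P (Fin.cast hpe.symm i), ∀ y ∈ P (Fin.cast hpe.symm j), Γ.Adj x y := by
    intro i j hij x hx y hy
    refine hPadj _ _ (fun h => hij (Fin.ext ?_)) x hx y hy
    have := congrArg Fin.val h
    simpa using this
  -- build the embedding
  apply hfree
  refine ⟨fun x => ((Q x.1).equivFin.symm (Fin.cast (hQcard x.1).symm x.2) : Fin m), ?_, ?_⟩
  · rintro ⟨i, xi⟩ ⟨j, yj⟩ hxy
    simp only at hxy
    by_cases hij : i = j
    · subst hij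
      have h1 : ((Q i).equivFin.symm (Fin.cast (hQcard i).symm xi) : {x // x ∈ Q i})
          = (Q i).equivFin.symm (Fin.cast (hQcard i).symm yj) := Subtype.coe_injective hxy
      have h2 : Fin.cast (hQcard i).symm xi = Fin.cast (hQcard i).symm yj :=
        (Q i).equivFin.symm.injective h1
      have h3 : xi = yj := Fin.ext (by simpa using congrArg Fin.val h2)
      rw [h3]
    · exfalso
      have hvi : ((Q i).equivFin.symm (Fin.cast (hQcard i).symm xi) : Fin m)
          ∈ P (Fin.cast hpe.symm i) := hQsub i ((Q i).equivFin.symm _).2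
      have hvj : ((Q i).equivFin.symm (Fin.cast (hQcard i).symm xi) : Fin m)
          ∈ P (Fin.cast hpe.symm j) := by
        rw [hxy]
        exact hQsub j ((Q j).equivFin.symm _).2
      exact Γ.loopless.irrefl _ (hP2adj i j hij _ hvi _ hvj)
  · rintro ⟨i, xi⟩ ⟨j, yj⟩ hadj
    have hij : i ≠ j := by
      simpa [completeMultipartiteGraph] using hadj
    exact hP2adj i j hij _ (hQsub i ((Q i).equivFin.symm _).2) _
      (hQsub j ((Q j).equivFin.symm _).2)
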